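/- For every pair (j₁,j₂) ∈ Θ₂, every λ ∈ (0,1/8], and every integer p ≠ p₀, one has |μ(j₁,j₂,p,λ)| ≤ K λ (|j₂| · |p − p₀|)^{−1/2}, where K is a constant depending only on c₁ and c₂. -/

import Mathlib

open Set Real MeasureTheory

theorem mu_bound_p_ne_p0
    (c₁ c₂ : ℝ) (hc₁ : 0 < c₁) (hc₁₂ : c₁ ≤ c₂) :
    ∃ K : ℝ, 0 < K ∧
      ∀ (ξ η : ℝ), ξ ≤ η →
      ∀ (f f' f'' : ℝ → ℝ),
        (∀ x, HasDerivAt f (f' x) x) →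
        (∀ x, HasDerivAt f' (f'' x) x) →
        Continuous f'' →
        (∀ x, c₁ ≤ |f'' x| ∧ |f'' x| ≤ c₂) →
      ∀ Mmax : ℝ, IsGreatest ((fun x => |f' x|) '' Icc ξ η) Mmax →
      ∀ j₁ j₂ : ℤ, j₂ ≠ 0 → |(j₁ : ℝ)| ≤ 2 * (1 + Mmax) * |(j₂ : ℝ)| →
      ∀ x₀ : ℝ, (j₁ : ℝ) + (j₂ : ℝ) * f' x₀ = 0 →
      ∀ p₀ : ℤ,
        -(1/2) < ((j₁ : ℝ) * x₀ + (j₂ : ℝ) * f x₀) - (p₀ : ℝ) →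
        ((j₁ : ℝ) * x₀ + (j₂ : ℝ) * f x₀) - (p₀ : ℝ) ≤ 1/2 →
      ∀ lam : ℝ, 0 < lam → lam ≤ 1/8 →
      ∀ p : ℤ, p ≠ p₀ →
        (volume {x ∈ Icc ξ η | |(j₁ : ℝ) * x + (j₂ : ℝ) * f x - (p : ℝ)| < lam}).toReal
          ≤ K * lam * ((|(j₂ : ℝ)| * |((p : ℝ)) - (p₀ : ℝ)|) ^ (-(1 : ℝ)/2)) := by
  have hc₂ : 0 < c₂ := lt_of_lt_of_le hc₁ hc₁₂
  refine ⟨16 * Real.sqrt c₂ / c₁, by positivity, ?_⟩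
  intro ξ η hξη f f' f'' hf hf' hf''c hbounds Mmax hM j₁ j₂ hj₂ hj₁ x₀ hx₀ p₀ hp₀l hp₀r
    lam hlam hlam8 p hp
  -- basic quantities
  set a : ℝ := |(j₂ : ℝ)| with ha_def
  set q : ℝ := |((p : ℝ)) - (p₀ : ℝ)| with hq_def
  clear_value a q
  have ha1 : (1:ℝ) ≤ a := by
    rw [ha_def]; exact_mod_cast Int.one_le_abs hj₂
  have hq1 : (1:ℝ) ≤ q := by
    rw [hq_def]
    have h : (1:ℤ) ≤ |p - p₀| := Int.one_le_abs (sub_ne_zero.mpr hp)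
    exact_mod_cast h
  have ha0 : 0 < a := lt_of_lt_of_le one_pos ha1
  have hq0 : 0 < q := lt_of_lt_of_le one_pos hq1
  -- F and its derivative G
  set F : ℝ → ℝ := fun x => (j₁ : ℝ) * x + (j₂ : ℝ) * f x with hF_def
  set G : ℝ → ℝ := fun x => (j₁ : ℝ) + (j₂ : ℝ) * f' x with hG_def
  clear_value F G
  have hFd : ∀ x, HasDerivAt F (G x) x := by
    intro x
    rw [hF_def, hG_def]
    simpa [Pi.add_def] using ((hasDerivAt_id x).const_mul (j₁ : ℝ)).add ((hf x).const_mul (j₂ : ℝ))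
  have hGd : ∀ x, HasDerivAt G ((j₂ : ℝ) * f'' x) x := by
    intro x
    rw [hG_def]
    simpa [Pi.add_def] using ((hasDerivAt_const x (j₁ : ℝ)).add ((hf' x).const_mul (j₂ : ℝ)))
  have hG0 : G x₀ = 0 := by rw [hG_def]; exact hx₀
  -- mean value theorem helper
  have mvt : ∀ (u v : ℝ), u < v → ∀ (g g' : ℝ → ℝ), (∀ x, HasDerivAt g (g' x) x) →
      ∃ c ∈ Ioo u v, g v - g u = g' c * (v - u) := by
    intro u v huv g g' hg
    obtain ⟨c, hc, hceq⟩ := exists_hasDerivAt_eq_slope g g' huv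
      (fun x _ => (hg x).continuousAt.continuousWithinAt) (fun x _ => hg x)
    refine ⟨c, hc, ?_⟩
    rw [hceq, div_mul_cancel₀ _ (sub_ne_zero.mpr huv.ne')]
  -- bounds on |G|
  have hGmain : ∀ u v : ℝ, u < v →
      c₁ * a * (v - u) ≤ |G v - G u| ∧ |G v - G u| ≤ c₂ * a * (v - u) := by
    intro u v huv
    obtain ⟨c, hc, heq⟩ := mvt u v huv G _ hGd
    have hb := hbounds c
    have habs : |G v - G u| = a * |f'' c| * (v - u) := by
      rw [heq, abs_mul, abs_mul, abs_of_pos (sub_pos.mpr huv), ha_def]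
    rw [habs]
    have hvu : (0:ℝ) ≤ v - u := by linarith
    constructor
    · calc c₁ * a * (v - u) = a * c₁ * (v - u) := by ring
        _ ≤ a * |f'' c| * (v - u) :=
          mul_le_mul_of_nonneg_right (mul_le_mul_of_nonneg_left hb.1 ha0.le) hvu
    · calc a * |f'' c| * (v - u) ≤ a * c₂ * (v - u) :=
          mul_le_mul_of_nonneg_right (mul_le_mul_of_nonneg_left hb.2 ha0.le) hvu
        _ = c₂ * a * (v - u) := by ring
  have hGb : ∀ x : ℝ, c₁ * a * |x - x₀| ≤ |G x| ∧ |G x| ≤ c₂ * a * |x - x₀| := by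
    intro x
    rcases lt_trichotomy x x₀ with h | h | h
    · have hm := hGmain x x₀ h
      rw [hG0, zero_sub, abs_neg] at hm
      rw [abs_sub_comm, abs_of_pos (sub_pos.mpr h)]
      exact hm
    · subst h
      simp [hG0]
    · have hm := hGmain x₀ x h
      rw [hG0, sub_zero] at hm
      rw [abs_of_pos (sub_pos.mpr h)]
      exact hm
  -- second-order bound on F around x₀
  have hFb : ∀ x : ℝ, |F x - F x₀| ≤ c₂ * a * (x - x₀)^2 := by
    intro x
    rcases lt_trichotomy x x₀ with h | h | h
    · obtain ⟨c, hc, heq⟩ := mvt x x₀ h F G hFd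
      have hGc : |G c| ≤ c₂ * a * (x₀ - x) := by
        refine (hGb c).2.trans ?_
        have : |c - x₀| ≤ x₀ - x := by
          rw [abs_sub_comm, abs_of_pos (sub_pos.mpr hc.2)]
          linarith [hc.1]
        exact mul_le_mul_of_nonneg_left this (by positivity)
      have : |F x - F x₀| = |G c| * (x₀ - x) := by
        rw [abs_sub_comm, heq, abs_mul, abs_of_pos (sub_pos.mpr h)]
      rw [this]
      calc |G c| * (x₀ - x) ≤ c₂ * a * (x₀ - x) * (x₀ - x) :=
            mul_le_mul_of_nonneg_right hGc (by linarith)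
        _ = c₂ * a * (x - x₀) ^ 2 := by ring
    · subst h; simp
    · obtain ⟨c, hc, heq⟩ := mvt x₀ x h F G hFd
      have hGc : |G c| ≤ c₂ * a * (x - x₀) := by
        refine (hGb c).2.trans ?_
        have : |c - x₀| ≤ x - x₀ := by
          rw [abs_of_pos (sub_pos.mpr hc.1)]
          linarith [hc.2]
        exact mul_le_mul_of_nonneg_left this (by positivity)
      have : |F x - F x₀| = |G c| * (x - x₀) := by
        rw [heq, abs_mul, abs_of_pos (sub_pos.mpr h)]
      rw [this]
      calc |G c| * (x - x₀) ≤ c₂ * a * (x - x₀) * (x - x₀) :=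
            mul_le_mul_of_nonneg_right hGc (by linarith)
        _ = c₂ * a * (x - x₀) ^ 2 := by ring
  -- the set
  set S : Set ℝ := {x ∈ Icc ξ η | |(j₁ : ℝ) * x + (j₂ : ℝ) * f x - (p : ℝ)| < lam} with hS_def
  clear_value S
  have hmemS : ∀ x, x ∈ S → |F x - (p : ℝ)| < lam := by
    intro x hx
    rw [hS_def] at hx
    rw [hF_def]
    exact hx.2
  have hFx₀ : |F x₀ - (p₀ : ℝ)| ≤ 1/2 := by
    rw [hF_def]
    exact abs_le.mpr ⟨by linarith, hp₀r⟩
  -- separation radius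
  set r : ℝ := Real.sqrt (3 * q / (8 * c₂ * a)) with hr_def
  clear_value r
  have hr0 : 0 < r := by
    rw [hr_def]; exact Real.sqrt_pos.mpr (by positivity)
  have hr2 : r ^ 2 = 3 * q / (8 * c₂ * a) := by
    rw [hr_def]; exact Real.sq_sqrt (by positivity)
  have hsep : ∀ x ∈ S, r ≤ |x - x₀| := by
    intro x hx
    have hxl := hmemS x hx
    have htri : q ≤ |F x - F x₀| + |F x₀ - (p₀ : ℝ)| + |F x - (p : ℝ)| := by
      have heqn : ((p : ℝ)) - (p₀ : ℝ) = (F x - F x₀) + (F x₀ - (p₀ : ℝ)) + (-(F x - (p : ℝ))) := by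
        ring
      calc q = |(F x - F x₀) + (F x₀ - (p₀ : ℝ)) + (-(F x - (p : ℝ)))| := by rw [hq_def, heqn]
        _ ≤ |(F x - F x₀) + (F x₀ - (p₀ : ℝ))| + |(-(F x - (p : ℝ)))| := abs_add_le _ _
        _ ≤ |F x - F x₀| + |F x₀ - (p₀ : ℝ)| + |(-(F x - (p : ℝ)))| := by
            linarith [abs_add_le (F x - F x₀) (F x₀ - (p₀ : ℝ))]
        _ = |F x - F x₀| + |F x₀ - (p₀ : ℝ)| + |F x - (p : ℝ)| := by rw [abs_neg]
    have h1 : 3 * q / 8 ≤ |F x - F x₀| := by linarith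
    have h2 := hFb x
    have h3 : r ^ 2 ≤ (x - x₀) ^ 2 := by
      rw [hr2, div_le_iff₀ (by positivity)]
      linarith
    calc r = Real.sqrt (r ^ 2) := (Real.sqrt_sq hr0.le).symm
      _ ≤ Real.sqrt ((x - x₀) ^ 2) := Real.sqrt_le_sqrt h3
      _ = |x - x₀| := Real.sqrt_sq_eq_abs _
  -- diameter bound on each side
  set D : ℝ := 2 * lam / (c₁ * a * r) with hD_def
  clear_value D
  have hD0 : 0 < D := by rw [hD_def]; positivity
  have hside : ∀ x y : ℝ, x ∈ S → y ∈ S → x < y → (x₀ ≤ x ∨ y ≤ x₀) → y - x ≤ D := by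
    intro x y hx hy hxy hsd
    obtain ⟨c, hc, heq⟩ := mvt x y hxy F G hFd
    have hcr : r ≤ |c - x₀| := by
      rcases hsd with h | h
      · have hs := hsep x hx
        rw [abs_of_nonneg (by linarith : (0:ℝ) ≤ x - x₀)] at hs
        rw [abs_of_nonneg (by linarith [hc.1] : (0:ℝ) ≤ c - x₀)]
        linarith [hc.1]
      · have hs := hsep y hy
        rw [abs_of_nonpos (by linarith : y - x₀ ≤ 0)] at hs
        rw [abs_of_nonpos (by linarith [hc.2] : c - x₀ ≤ 0)]
        linarith [hc.2]
    have hGc : c₁ * a * r ≤ |G c| := by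
      refine le_trans ?_ (hGb c).1
      exact mul_le_mul_of_nonneg_left hcr (by positivity)
    have hFF : |F y - F x| < 2 * lam := by
      have hx2 := hmemS x hx
      have hy2 := hmemS y hy
      have : F y - F x = (F y - (p : ℝ)) - (F x - (p : ℝ)) := by ring
      rw [this]
      calc |(F y - (p : ℝ)) - (F x - (p : ℝ))| ≤ |F y - (p : ℝ)| + |F x - (p : ℝ)| :=
            abs_sub _ _
        _ < 2 * lam := by linarith
    have hlow : c₁ * a * r * (y - x) ≤ |F y - F x| := by
      rw [heq, abs_mul, abs_of_pos (sub_pos.mpr hxy)]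
      exact mul_le_mul_of_nonneg_right hGc (by linarith)
    rw [hD_def, le_div_iff₀ (by positivity)]
    linarith
  -- measure bound
  have hbound : ∀ T : Set ℝ, T ⊆ S → ((∀ x ∈ T, x₀ ≤ x) ∨ (∀ x ∈ T, x ≤ x₀)) →
      volume T ≤ ENNReal.ofReal (2 * D) := by
    intro T hTS hmono
    rcases T.eq_empty_or_nonempty with h | ⟨z, hz⟩
    · simp [h]
    · have key : ∀ u v : ℝ, u ∈ T → v ∈ T → u < v → v - u ≤ D := by
        intro u v hu hv huv
        refine hside u v (hTS hu) (hTS hv) huv ?_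
        rcases hmono with h | h
        · exact Or.inl (h u hu)
        · exact Or.inr (h v hv)
      have hT : T ⊆ Icc (z - D) (z + D) := by
        intro x hx
        constructor
        · rcases lt_or_ge x z with h | h
          · linarith [key x z hx hz h]
          · linarith
        · rcases lt_or_ge z x with h | h
          · linarith [key z x hz hx h]
          · linarith
      calc volume T ≤ volume (Icc (z - D) (z + D)) := measure_mono hT
        _ = ENNReal.ofReal (z + D - (z - D)) := Real.volume_Icc
        _ = ENNReal.ofReal (2 * D) := by congr 1; ring
  have hcover : S ⊆ (S ∩ Iic x₀) ∪ (S ∩ Ici x₀) := by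
    intro x hx
    rcases le_total x x₀ with h | h
    · exact Or.inl ⟨hx, h⟩
    · exact Or.inr ⟨hx, h⟩
  have hvol : volume S ≤ ENNReal.ofReal (4 * D) := by
    calc volume S ≤ volume ((S ∩ Iic x₀) ∪ (S ∩ Ici x₀)) := measure_mono hcover
      _ ≤ volume (S ∩ Iic x₀) + volume (S ∩ Ici x₀) := measure_union_le _ _
      _ ≤ ENNReal.ofReal (2 * D) + ENNReal.ofReal (2 * D) := by
          refine add_le_add (hbound _ inter_subset_left (Or.inr fun x hx => hx.2))
            (hbound _ inter_subset_left (Or.inl fun x hx => hx.2))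
      _ = ENNReal.ofReal (4 * D) := by
          rw [← ENNReal.ofReal_add (by positivity) (by positivity)]
          congr 1; ring
  have hto : (volume S).toReal ≤ 4 * D := ENNReal.toReal_le_of_le_ofReal (by positivity) hvol
  -- final arithmetic
  set s : ℝ := Real.sqrt (a * q) with hs_def
  clear_value s
  have hs0 : 0 < s := by rw [hs_def]; exact Real.sqrt_pos.mpr (by positivity)
  have hsle : s ≤ 2 * Real.sqrt c₂ * (a * r) := by
    have hsq : (2 * Real.sqrt c₂ * (a * r)) ^ 2 = (3/2) * (a * q) := by
      have h1 : (Real.sqrt c₂) ^ 2 = c₂ := Real.sq_sqrt hc₂.le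
      have h2 : (2 * Real.sqrt c₂ * (a * r)) ^ 2 = 4 * ((Real.sqrt c₂)^2) * a^2 * r^2 := by ring
      rw [h2, h1, hr2, ← mul_div_assoc, div_eq_iff (by positivity : (8:ℝ) * c₂ * a ≠ 0)]
      ring
    have h3 : s ≤ Real.sqrt ((2 * Real.sqrt c₂ * (a * r)) ^ 2) := by
      rw [hs_def]
      apply Real.sqrt_le_sqrt
      rw [hsq]
      nlinarith [ha0, hq0]
    rwa [Real.sqrt_sq (by positivity)] at h3
  have hrpow : (a * q) ^ (-(1 : ℝ)/2) = s⁻¹ := by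
    rw [hs_def, show (-(1 : ℝ)/2) = -(1/2) by ring, Real.rpow_neg (by positivity),
      Real.sqrt_eq_rpow]
  rw [hrpow]
  refine hto.trans ?_
  have hrhs : 16 * Real.sqrt c₂ / c₁ * lam * s⁻¹ = 16 * Real.sqrt c₂ * lam / (c₁ * s) := by
    rw [div_mul_eq_mul_div, div_mul_eq_mul_div, ← div_eq_mul_inv, div_div, mul_comm s c₁]
  have hlhs : 4 * D = 8 * lam / (c₁ * a * r) := by rw [hD_def]; ring
  rw [hrhs, hlhs, div_le_div_iff₀ (by positivity) (by positivity)]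
  linarith [mul_le_mul_of_nonneg_left hsle (by positivity : (0:ℝ) ≤ 8 * lam * c₁)]
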